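/- Let δ₂ = (4√3·e^{-π/8}/π)·√(8 + 8e^{π/2} - (π² + 8√2)·e^{π/4}) (approximately 0.22525). Then the quantity under the square root is positive, δ₂ ∈ (0, π/2), and for every real x with δ₂ ≤ x ≤ π/2: (4/π²)·(cosh(π/4) - √2/2) - x²/192 ≤ 1/4. -/

import Mathlib

open Real
set_option maxHeartbeats 1000000

theorem upper_bound_improvement_interval :
    0 < 8 + 8 * Real.exp (π / 2) - (π ^ 2 + 8 * Real.sqrt 2) * Real.exp (π / 4) ∧
    (4 * Real.sqrt 3 * Real.exp (-π / 8) / π) *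
      Real.sqrt (8 + 8 * Real.exp (π / 2) - (π ^ 2 + 8 * Real.sqrt 2) * Real.exp (π / 4)) ∈
      Set.Ioo 0 (π / 2) ∧
    ∀ x : ℝ,
      (4 * Real.sqrt 3 * Real.exp (-π / 8) / π) *
        Real.sqrt (8 + 8 * Real.exp (π / 2) - (π ^ 2 + 8 * Real.sqrt 2) * Real.exp (π / 4)) ≤ x →
      x ≤ π / 2 →
      (4 / π ^ 2) * (Real.cosh (π / 4) - Real.sqrt 2 / 2) - x ^ 2 / 192 ≤ 1 / 4 := by
  have hπl : (3.141592 : ℝ) < π := Real.pi_gt_d6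
  have hπu : π < 3.141593 := Real.pi_lt_d6
  have hπ0 : (0:ℝ) < π := by linarith
  set t : ℝ := Real.exp (π / 4) with ht
  have ht0' : (0:ℝ) < t := Real.exp_pos _
  have htsq : Real.exp (π / 2) = t ^ 2 := by
    rw [ht, sq, ← Real.exp_add]; ring_nf
  have ht0 : (2.19327 : ℝ) ≤ t := by
    have h := Real.sum_le_exp_of_nonneg (x := 0.785398) (by norm_num) 9
    simp [Finset.sum_range_succ, Nat.factorial] at h
    have h2 : Real.exp 0.785398 ≤ t := by
      apply Real.exp_le_exp.mpr; norm_num; linarith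
    norm_num at h ⊢
    linarith
  have ht1 : t ≤ 2.2381 := by
    have he : t * Real.exp (1 - π / 4) = Real.exp 1 := by
      rw [ht, ← Real.exp_add]; ring_nf
    have h1 : (1.2146 : ℝ) ≤ Real.exp (1 - π / 4) := by
      have := Real.add_one_le_exp (1 - π / 4); linarith
    have h2 : Real.exp 1 < 2.7182818286 := Real.exp_one_lt_d9
    nlinarith
  have hs2l : (1.414213 : ℝ) ≤ Real.sqrt 2 := by
    rw [show (1.414213:ℝ) = Real.sqrt (1.414213^2) by rw [Real.sqrt_sq]; norm_num]
    apply Real.sqrt_le_sqrt; norm_num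
  have hs2u : Real.sqrt 2 ≤ 1.4142136 := by
    rw [show (1.4142136:ℝ) = Real.sqrt (1.4142136^2) by rw [Real.sqrt_sq]; norm_num]
    apply Real.sqrt_le_sqrt; norm_num
  have hs3u : Real.sqrt 3 ≤ 1.7320509 := by
    rw [show (1.7320509:ℝ) = Real.sqrt (1.7320509^2) by rw [Real.sqrt_sq]; norm_num]
    apply Real.sqrt_le_sqrt; norm_num
  set A : ℝ := 8 + 8 * Real.exp (π / 2) - (π ^ 2 + 8 * Real.sqrt 2) * Real.exp (π / 4) with hA
  have hAt : A = 8 + 8 * t ^ 2 - (π ^ 2 + 8 * Real.sqrt 2) * t := by rw [hA, htsq]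
  have hcl : (21.1833 : ℝ) ≤ π ^ 2 + 8 * Real.sqrt 2 := by nlinarith
  have hcu : π ^ 2 + 8 * Real.sqrt 2 ≤ 21.18332 := by nlinarith
  have hApos : 0 < A := by
    rw [hAt]
    nlinarith [sq_nonneg (t - 2.19327), mul_le_mul_of_nonneg_right hcu ht0'.le]
  have hAub : A ≤ 0.68 := by
    rw [hAt]
    nlinarith [mul_nonneg (sub_nonneg.mpr ht1) (sub_nonneg.mpr ht0),
      mul_le_mul_of_nonneg_right hcl ht0'.le]
  refine ⟨hApos, ⟨?_, ?_⟩, ?_⟩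
  · positivity
  · have hsA : Real.sqrt A ≤ 0.825 := by
      rw [show (0.825:ℝ) = Real.sqrt (0.825^2) by rw [Real.sqrt_sq]; norm_num]
      apply Real.sqrt_le_sqrt; nlinarith
    have hsA0 : 0 ≤ Real.sqrt A := Real.sqrt_nonneg _
    have he8 : Real.exp (-π / 8) ≤ 0.7195 := by
      have h1 : (1.39 : ℝ) ≤ Real.exp (π / 8) := by
        have := Real.add_one_le_exp (π / 8); linarith
      have h2 : Real.exp (-π / 8) * Real.exp (π / 8) = 1 := by
        rw [← Real.exp_add]; ring_nf; exact Real.exp_zero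
      nlinarith [Real.exp_pos (-π / 8)]
    have he80 : 0 < Real.exp (-π / 8) := Real.exp_pos _
    have hs30 : 0 ≤ Real.sqrt 3 := Real.sqrt_nonneg _
    have hm1 : Real.sqrt 3 * Real.exp (-π / 8) ≤ 1.7320509 * 0.7195 :=
      mul_le_mul hs3u he8 he80.le (by norm_num)
    have hm2 : Real.sqrt 3 * Real.exp (-π / 8) * Real.sqrt A ≤ 1.7320509 * 0.7195 * 0.825 :=
      mul_le_mul hm1 hsA hsA0 (by norm_num)
    have hpp : (9.8696:ℝ) < π * π := by nlinarith
    rw [div_mul_eq_mul_div, div_lt_iff₀ hπ0]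
    nlinarith [hm2, hpp]
  · intro x hx1 hx2
    have hδ0 : 0 ≤ (4 * Real.sqrt 3 * Real.exp (-π / 8) / π) * Real.sqrt A := by positivity
    have h3 : Real.sqrt 3 ^ 2 = 3 := Real.sq_sqrt (by norm_num)
    have h8 : Real.exp (-π / 8) ^ 2 = 1 / t := by
      rw [sq, ← Real.exp_add, ht, one_div, ← Real.exp_neg]
      congr 1; ring
    have hxsq : 48 / (t * π ^ 2) * A ≤ x ^ 2 := by
      have h := mul_self_le_mul_self hδ0 hx1
      have heq : ((4 * Real.sqrt 3 * Real.exp (-π / 8) / π) * Real.sqrt A) ^ 2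
          = 48 / (t * π ^ 2) * A := by
        rw [mul_pow, Real.sq_sqrt hApos.le, div_pow, mul_pow, mul_pow, h3, h8]
        field_simp
        norm_num
      nlinarith [heq, h]
    have hcosh : Real.cosh (π / 4) = (t + 1 / t) / 2 := by
      rw [Real.cosh_eq, ht, Real.exp_neg, inv_eq_one_div]
    have key : (4 / π ^ 2) * (Real.cosh (π / 4) - Real.sqrt 2 / 2)
        - (48 / (t * π ^ 2) * A) / 192 = 1 / 4 := by
      rw [hcosh, hAt]
      field_simp
      ring
    linarith [key, hxsq]
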